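/- arXiv:1207.3593 — 2 statements merged into one kernel-verified Lean document; each statement's English description precedes it below -/
import Mathlib

section
/- Let V and V' be left vector spaces over division rings R and R' with dim V = n ≥ 2 finite, and let g : V → V' be a non-trivial GL-mapping such that the R'-subspace spanned by g(V) has dimension at most n. Then for every non-zero subspace S ⊆ V, the R'-subspace of V' spanned by g(S) has dimension equal to dim S. -/
open Module Submodule

section Aux
variable {R V : Type*} [DivisionRing R] [AddCommGroup V] [Module R V]

/-- For a nonzero vector there is a functional taking value 1 on it. -/
lemma aux_dual {v : V} (hv : v ≠ 0) : ∃ f : V →ₗ[R] R, f v = 1 := by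
  obtain ⟨C, hC⟩ := Submodule.exists_isCompl (Submodule.span R {v})
  let e := LinearEquiv.toSpanNonzeroSingleton R V v hv
  refine ⟨(e.symm.toLinearMap.comp (LinearMap.fst R _ _)).comp
      (Submodule.prodEquivOfIsCompl _ _ hC).symm.toLinearMap, ?_⟩
  have h1 : (Submodule.prodEquivOfIsCompl _ _ hC).symm v
      = (⟨v, Submodule.mem_span_singleton_self v⟩, 0) :=
    Submodule.prodEquivOfIsCompl_symm_apply_left _ _ hC ⟨v, Submodule.mem_span_singleton_self v⟩
  have h2 : e 1 = ⟨v, Submodule.mem_span_singleton_self v⟩ := by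
    simp [e, LinearEquiv.toSpanNonzeroSingleton_apply]
  simp only [LinearMap.comp_apply, LinearEquiv.coe_toLinearMap, h1, LinearMap.fst_apply]
  rw [← h2, LinearEquiv.symm_apply_apply]

/-- Extend a linear equivalence between submodules to an automorphism. -/
lemma aux_extend [FiniteDimensional R V] (S T : Submodule R V) (e : S ≃ₗ[R] T) :
    ∃ u : V ≃ₗ[R] V, ∀ s : S, u s = e s := by
  obtain ⟨S', hS'⟩ := Submodule.exists_isCompl S
  obtain ⟨T', hT'⟩ := Submodule.exists_isCompl T
  have h1 : finrank R S' = finrank R T' := by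
    have a1 := Submodule.finrank_add_eq_of_isCompl hS'
    have a2 := Submodule.finrank_add_eq_of_isCompl hT'
    have a3 := e.finrank_eq
    omega
  obtain ⟨e'⟩ := FiniteDimensional.nonempty_linearEquiv_of_finrank_eq h1
  refine ⟨((Submodule.prodEquivOfIsCompl S S' hS').symm.trans (e.prodCongr e')).trans
      (Submodule.prodEquivOfIsCompl T T' hT'), fun s => ?_⟩
  have h2 : (Submodule.prodEquivOfIsCompl S S' hS').symm (s : V) = (s, 0) :=
    Submodule.prodEquivOfIsCompl_symm_apply_left _ _ hS' s
  simp [LinearEquiv.trans_apply, h2, Submodule.coe_prodEquivOfIsCompl', LinearEquiv.prodCongr_apply]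

end Aux

section Aux2
variable {R V : Type*} [DivisionRing R] [AddCommGroup V] [Module R V]

lemma aux_transitive_vec [FiniteDimensional R V] {x y : V} (hx : x ≠ 0) (hy : y ≠ 0) :
    ∃ u : V ≃ₗ[R] V, u x = y := by
  let ex := LinearEquiv.toSpanNonzeroSingleton R V x hx
  let ey := LinearEquiv.toSpanNonzeroSingleton R V y hy
  obtain ⟨u, hu⟩ := aux_extend (Submodule.span R {x}) (Submodule.span R {y}) (ex.symm.trans ey)
  refine ⟨u, ?_⟩
  have h1 := hu ⟨x, Submodule.mem_span_singleton_self x⟩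
  have hx1 : ex 1 = ⟨x, Submodule.mem_span_singleton_self x⟩ := by
    simp [ex, LinearEquiv.toSpanNonzeroSingleton_apply]
  have hy1 : (ey 1 : V) = y := by
    simp [ey, LinearEquiv.toSpanNonzeroSingleton_apply]
  rw [LinearEquiv.trans_apply, ← hx1, LinearEquiv.symm_apply_apply, hy1, hx1] at h1
  simpa using h1

lemma aux_transitive_sub [FiniteDimensional R V] {S T : Submodule R V}
    (h : finrank R S = finrank R T) :
    ∃ u : V ≃ₗ[R] V, Submodule.map (u : V →ₗ[R] V) S = T := by
  obtain ⟨e⟩ := FiniteDimensional.nonempty_linearEquiv_of_finrank_eq h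
  obtain ⟨u, hu⟩ := aux_extend S T e
  refine ⟨u, le_antisymm ?_ ?_⟩
  · rintro _ ⟨s, hs, rfl⟩
    have := hu ⟨s, hs⟩
    simp only [LinearEquiv.coe_coe]
    rw [this]
    exact (e ⟨s, hs⟩).2
  · intro t ht
    refine ⟨(e.symm ⟨t, ht⟩ : V), (e.symm ⟨t, ht⟩).2, ?_⟩
    have := hu (e.symm ⟨t, ht⟩)
    simp only [LinearEquiv.coe_coe]
    rw [this, LinearEquiv.apply_symm_apply]

/-- The shear `x ↦ x + f x • h` for `f h = 0` is a linear automorphism. -/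
noncomputable def shear (f : V →ₗ[R] R) (h : V) (hfh : f h = 0) : V ≃ₗ[R] V where
  toFun x := x + f x • h
  invFun x := x - f x • h
  map_add' x y := by simp [add_smul]; abel
  map_smul' c x := by simp [mul_smul, smul_add]
  left_inv x := by simp [hfh]
  right_inv x := by simp [hfh]

@[simp] lemma shear_apply (f : V →ₗ[R] R) (h : V) (hfh : f h = 0) (x : V) :
    shear f h hfh x = x + f x • h := rfl

end Aux2
section Aux3
variable {R R' V V' : Type*} [DivisionRing R] [DivisionRing R']
  [AddCommGroup V] [Module R V] [AddCommGroup V'] [Module R' V']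
  [FiniteDimensional R V]

lemma aux_invariant
    (g : V → V') (hGL : ∀ u : V ≃ₗ[R] V, ∃ u' : V' ≃ₗ[R'] V', g ∘ ⇑u = ⇑u' ∘ g)
    {S T : Submodule R V} (h : finrank R S = finrank R T) :
    finrank R' (span R' (g '' (S : Set V))) = finrank R' (span R' (g '' (T : Set V))) := by
  obtain ⟨u, hu⟩ := aux_transitive_sub h
  obtain ⟨u', hu'⟩ := hGL u
  have himg : g '' (T : Set V) = ⇑u' '' (g '' (S : Set V)) := by
    rw [← hu, Submodule.map_coe]
    rw [Set.image_image, Set.image_image]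
    exact Set.image_congr fun x _ => congrFun hu' x
  rw [himg, show ⇑u' '' (g '' (S : Set V)) = ⇑(u' : V' →ₗ[R'] V') '' (g '' (S : Set V)) from rfl,
    Submodule.span_image]
  have : Submodule.map (u' : V' →ₗ[R'] V') (span R' (g '' (S : Set V)))
      = Submodule.map (u' : V' →ₗ[R'] V') (span R' (g '' (S : Set V))) := rfl
  rw [this]
  exact (u'.submoduleMap (span R' (g '' (S : Set V)))).finrank_eq

lemma aux_gnonzero
    (g : V → V') (hGL : ∀ u : V ≃ₗ[R] V, ∃ u' : V' ≃ₗ[R'] V', g ∘ ⇑u = ⇑u' ∘ g)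
    (hnt : ∃ x y : V, x ≠ 0 ∧ y ≠ 0 ∧ g x ≠ g y) {x : V} (hx : x ≠ 0) :
    g x ≠ 0 := by
  intro hgx
  obtain ⟨a, b, ha, hb, hab⟩ := hnt
  have key : ∀ z : V, z ≠ 0 → g z = 0 := by
    intro z hz
    obtain ⟨u, hu⟩ := aux_transitive_vec (R := R) hx hz
    obtain ⟨u', hu'⟩ := hGL u
    have : g (u x) = u' (g x) := congrFun hu' x
    rw [hu, hgx, map_zero] at this
    exact this
  exact hab ((key a ha).trans (key b hb).symm)

end Aux3
section Aux4
variable {R R' V V' : Type*} [DivisionRing R] [DivisionRing R']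
  [AddCommGroup V] [Module R V] [AddCommGroup V'] [Module R' V']
  [FiniteDimensional R V]

lemma aux_nocollapse
    (n : ℕ) (hn : 2 ≤ n) (hdim : finrank R V = n)
    (g : V → V')
    (hGL : ∀ u : V ≃ₗ[R] V, ∃ u' : V' ≃ₗ[R'] V', g ∘ ⇑u = ⇑u' ∘ g)
    (hnt : ∃ x y : V, x ≠ 0 ∧ y ≠ 0 ∧ g x ≠ g y)
    (hWfd : FiniteDimensional R' (span R' (Set.range g)))
    {S T : Submodule R V} (hST : S ≤ T) (hrank : finrank R T = finrank R S + 1)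
    (heq : span R' (g '' (S : Set V)) = span R' (g '' (T : Set V))) : False := by
  haveI := hWfd
  set W := span R' (Set.range g) with hWdef
  have hleW : ∀ A : Set V, span R' (g '' A) ≤ W :=
    fun A => Submodule.span_mono (Set.image_subset_range g A)
  have hk1 : finrank R S + 1 ≤ n := by
    rw [← hrank, ← hdim]; exact Submodule.finrank_le T
  -- Step 1: every value of g lies in the span of g '' S
  have step1 : ∀ v : V, g v ∈ span R' (g '' (S : Set V)) := by
    intro v
    by_cases hv : v ∈ S
    · exact Submodule.subset_span (Set.mem_image_of_mem g hv)
    · set T' := span R {v} ⊔ S with hT'def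
      have hvT' : v ∈ T' := Submodule.mem_sup_left (Submodule.mem_span_singleton_self v)
      have hbot : span R {v} ⊓ S = ⊥ := by
        rw [Submodule.eq_bot_iff]
        rintro w ⟨hw1, hw2⟩
        obtain ⟨c, rfl⟩ := Submodule.mem_span_singleton.1 hw1
        rcases eq_or_ne c 0 with rfl | hc
        · simp
        · exact absurd (by simpa [smul_smul, inv_mul_cancel₀ hc] using S.smul_mem c⁻¹ hw2) hv
      have hrank' : finrank R T' = finrank R S + 1 := by
        have h0 := Submodule.finrank_sup_add_finrank_inf_eq (span R {v}) S
        rw [hbot, ← hT'def] at h0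
        have hv0 : v ≠ 0 := fun h => hv (h ▸ S.zero_mem)
        rw [finrank_span_singleton hv0, finrank_bot] at h0
        omega
      have hinv : finrank R' (span R' (g '' (T' : Set V)))
          = finrank R' (span R' (g '' (T : Set V))) :=
        aux_invariant g hGL (by rw [hrank', hrank])
      have hle' : span R' (g '' (S : Set V)) ≤ span R' (g '' (T' : Set V)) :=
        Submodule.span_mono (Set.image_mono (f := g) (by exact_mod_cast le_sup_right (a := span R {v})))
      haveI : FiniteDimensional R' (span R' (g '' (T' : Set V))) :=
        Submodule.finiteDimensional_of_le (hleW _)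
      have hEq : span R' (g '' (S : Set V)) = span R' (g '' (T' : Set V)) := by
        apply Submodule.eq_of_le_of_finrank_eq hle'
        rw [hinv, heq]
      rw [hEq]
      exact Submodule.subset_span (Set.mem_image_of_mem g hvT')
  -- Step 2: span of g '' S is all of W
  have hWS : span R' (g '' (S : Set V)) = W := by
    refine le_antisymm (hleW _) ?_
    rw [hWdef, Submodule.span_le]
    rintro _ ⟨v, rfl⟩
    exact step1 v
  -- Step 3: for every nonzero functional, the span of g '' (ker f) is W
  have step3 : ∀ f : V →ₗ[R] R, f ≠ 0 →
      span R' (g '' ((LinearMap.ker f : Submodule R V) : Set V)) = W := by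
    intro f hf
    have hsurj : LinearMap.range f = ⊤ := by
      obtain ⟨x, hx⟩ : ∃ x, f x ≠ 0 := by
        by_contra hc
        push_neg at hc
        exact hf (LinearMap.ext fun x => hc x)
      rw [eq_top_iff]
      intro c _
      exact ⟨(c * (f x)⁻¹) • x, by
        simp [map_smul, smul_eq_mul, mul_assoc, inv_mul_cancel₀ hx]⟩
    have hker : finrank R (LinearMap.ker f) + 1 = n := by
      have h0 := LinearMap.finrank_range_add_finrank_ker f
      rw [hsurj, finrank_top, finrank_self, hdim] at h0
      omega
    have hkS : finrank R S ≤ finrank R (LinearMap.ker f) := by omega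
    obtain ⟨b, hb⟩ := exists_linearIndependent_of_le_finrank
      (R := R) (M := ↥(LinearMap.ker f)) hkS
    set S' := Submodule.map (LinearMap.ker f).subtype (span R (Set.range b)) with hS'def
    have hS'le : S' ≤ LinearMap.ker f := Submodule.map_subtype_le _ _
    have hS'rank : finrank R S' = finrank R S := by
      rw [hS'def,
        ← (Submodule.equivMapOfInjective _ (Submodule.injective_subtype _) _).finrank_eq,
        finrank_span_eq_card hb, Fintype.card_fin]
    have hWS' : span R' (g '' (S' : Set V)) = W := by
      haveI : FiniteDimensional R' (span R' (g '' (S' : Set V))) :=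
        Submodule.finiteDimensional_of_le (hleW _)
      refine Submodule.eq_of_le_of_finrank_eq (hleW _) ?_
      rw [aux_invariant g hGL hS'rank, hWS]
    refine le_antisymm (hleW _) ?_
    rw [← hWS']
    exact Submodule.span_mono (Set.image_mono (f := g) (SetLike.coe_subset_coe.2 hS'le))
  -- Step 4: shear invariance of g
  have step4 : ∀ (f : V →ₗ[R] R), f ≠ 0 → ∀ h : V, f h = 0 →
      ∀ x : V, g (x + f x • h) = g x := by
    intro f hf h hfh x
    obtain ⟨u', hu'⟩ := hGL (shear f h hfh)
    have fix : Set.EqOn ⇑(u' : V' →ₗ[R'] V') ⇑(LinearMap.id (R := R') (M := V'))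
        (g '' ((LinearMap.ker f : Submodule R V) : Set V)) := by
      rintro _ ⟨z, hz, rfl⟩
      have h1 : u' (g z) = g (shear f h hfh z) := (congrFun hu' z).symm
      rw [shear_apply] at h1
      have hz0 : f z = 0 := hz
      rw [hz0, zero_smul, add_zero] at h1
      simpa using h1
    have fixW : ∀ w ∈ W, u' w = w := by
      rw [← step3 f hf]
      intro w hw
      simpa using LinearMap.eqOn_span' fix hw
    have h2 : g (shear f h hfh x) = u' (g x) := congrFun hu' x
    rw [shear_apply] at h2
    rw [h2, fixW _ (Submodule.subset_span ⟨x, rfl⟩)]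
  -- Step 5: g is constant on nonzero vectors
  have step5 : ∀ x h : V, x ∉ span R {h} → g (x + h) = g x := by
    intro x h hxh
    set U := span R {h} with hU
    have hxq : (U.mkQ x) ≠ 0 := by
      simpa [Submodule.Quotient.mk_eq_zero] using hxh
    obtain ⟨φ, hφ⟩ := aux_dual (R := R) hxq
    set f := φ.comp U.mkQ with hfdef
    have hfh : f h = 0 := by
      have : U.mkQ h = 0 := (Submodule.Quotient.mk_eq_zero U).2
        (Submodule.mem_span_singleton_self h)
      simp [hfdef, this]
    have hfx : f x = 1 := hφ
    have hf0 : f ≠ 0 := by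
      intro hc
      rw [hc] at hfx
      simp at hfx
    have := step4 f hf0 h hfh x
    rwa [hfx, one_smul] at this
  have step6 : ∀ x y : V, x ≠ 0 → y ∉ span R {x} → g y = g x := by
    intro x y hx hyx
    have hxh : x ∉ span R {y - x} := by
      intro hmem
      obtain ⟨c, hc⟩ := Submodule.mem_span_singleton.1 hmem
      apply hyx
      have hc0 : c ≠ 0 := by
        rintro rfl
        rw [zero_smul] at hc
        exact hx hc.symm
      have : y = c⁻¹ • x + x := by
        have h1 : c • y - c • x = x := by rw [← smul_sub, hc]
        have h2 : c • y = x + c • x := sub_eq_iff_eq_add.1 h1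
        calc y = c⁻¹ • (c • y) := by rw [smul_smul, inv_mul_cancel₀ hc0, one_smul]
        _ = c⁻¹ • (x + c • x) := by rw [h2]
        _ = c⁻¹ • x + x := by rw [smul_add, smul_smul, inv_mul_cancel₀ hc0, one_smul]
      rw [this]
      exact Submodule.add_mem _
        (Submodule.smul_mem _ _ (Submodule.mem_span_singleton_self x))
        (Submodule.mem_span_singleton_self x)
    have := step5 x (y - x) hxh
    rwa [add_sub_cancel] at this
  have step7 : ∀ x y : V, x ≠ 0 → y ≠ 0 → g x = g y := by
    intro x y hx hy
    by_cases hyx : y ∈ span R {x}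
    · have hxtop : span R {x} ≠ ⊤ := by
        intro hc
        have h1 : finrank R (span R {x} : Submodule R V) = 1 := finrank_span_singleton hx
        rw [hc, finrank_top, hdim] at h1
        omega
      obtain ⟨z, -, hz⟩ := SetLike.exists_of_lt (show span R {x} < (⊤ : Submodule R V) from Ne.lt_top hxtop)
      have hz0 : z ≠ 0 := fun h => hz (h ▸ Submodule.zero_mem _)
      have hzy : z ∉ span R {y} := fun hmem =>
        hz ((Submodule.span_le.2 (by simpa using hyx)) hmem)
      rw [← step6 x z hx hz, ← step6 y z hy hzy]
    · exact (step6 x y hx hyx).symm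
  obtain ⟨a, b, ha, hb, hab⟩ := hnt
  exact hab (step7 a b ha hb)

end Aux4
/-- **Lemma 7 (Pankov).** If `g` is a non-trivial GL-mapping with `dim V_g ≤ n`, then
`dim S_g = dim S` for every non-zero subspace `S ⊆ V`. -/
theorem stmt_11 {R R' V V' : Type*} [DivisionRing R] [DivisionRing R']
    [AddCommGroup V] [Module R V] [AddCommGroup V'] [Module R' V']
    (n : ℕ) (hn : 2 ≤ n) [FiniteDimensional R V] (hdim : Module.finrank R V = n)
    (g : V → V')
    (hGL : ∀ u : V ≃ₗ[R] V, ∃ u' : V' ≃ₗ[R'] V', g ∘ ⇑u = ⇑u' ∘ g)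
    (hnt : ∃ x y : V, x ≠ 0 ∧ y ≠ 0 ∧ g x ≠ g y)
    (hspan : Module.rank R' (Submodule.span R' (Set.range g)) ≤ n) :
    ∀ S : Submodule R V, S ≠ ⊥ →
      Module.rank R' (Submodule.span R' (g '' (S : Set V)))
        = (Module.finrank R S : Cardinal) := by
  intro S hS
  have hWrank : Module.rank R' (span R' (Set.range g)) < Cardinal.aleph0 :=
    lt_of_le_of_lt hspan (Cardinal.nat_lt_aleph0 n)
  haveI hWfd : FiniteDimensional R' (span R' (Set.range g)) :=
    Module.rank_lt_aleph0_iff.mp hWrank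
  have hleW : ∀ A : Set V, span R' (g '' A) ≤ span R' (Set.range g) :=
    fun A => Submodule.span_mono (Set.image_subset_range g A)
  -- strict growth along covers
  have strict : ∀ S₁ T₁ : Submodule R V, S₁ ≤ T₁ → finrank R T₁ = finrank R S₁ + 1 →
      finrank R' (span R' (g '' (S₁ : Set V))) + 1
        ≤ finrank R' (span R' (g '' (T₁ : Set V))) := by
    intro S₁ T₁ h1 h2
    haveI := Submodule.finiteDimensional_of_le (hleW (T₁ : Set V))
    have hle : span R' (g '' (S₁ : Set V)) ≤ span R' (g '' (T₁ : Set V)) :=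
      Submodule.span_mono (Set.image_mono (f := g) (SetLike.coe_subset_coe.2 h1))
    have hne : span R' (g '' (S₁ : Set V)) ≠ span R' (g '' (T₁ : Set V)) :=
      fun hc => aux_nocollapse n hn hdim g hGL hnt hWfd h1 h2 hc
    have := Submodule.finrank_lt_finrank_of_lt (lt_of_le_of_ne hle hne)
    omega
  -- upper bound by downward induction
  have upper : ∀ c (S₁ : Submodule R V), finrank R S₁ + c = n →
      finrank R' (span R' (g '' (S₁ : Set V))) + c ≤ n := by
    intro c
    induction c with
    | zero =>
      intro S₁ h
      have hTop : S₁ = ⊤ := Submodule.eq_top_of_finrank_eq (by omega)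
      have himg : g '' ((⊤ : Submodule R V) : Set V) = Set.range g := by
        rw [Submodule.top_coe, Set.image_univ]
      rw [hTop, himg]
      simpa using Module.finrank_le_of_rank_le hspan
    | succ c ih =>
      intro S₁ h
      have hlt : finrank R S₁ < n := by omega
      have hS₁top : S₁ ≠ ⊤ := by
        intro hc
        rw [hc, finrank_top, hdim] at hlt
        omega
      obtain ⟨v, -, hv⟩ := SetLike.exists_of_lt
        (show S₁ < (⊤ : Submodule R V) from hS₁top.lt_top)
      have hbot : span R {v} ⊓ S₁ = ⊥ := by
        rw [Submodule.eq_bot_iff]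
        rintro w ⟨hw1, hw2⟩
        obtain ⟨c', rfl⟩ := Submodule.mem_span_singleton.1 hw1
        rcases eq_or_ne c' 0 with rfl | hc
        · simp
        · exact absurd (by simpa [smul_smul, inv_mul_cancel₀ hc]
            using S₁.smul_mem c'⁻¹ hw2) hv
      have hv0 : v ≠ 0 := fun hz => hv (hz ▸ S₁.zero_mem)
      have hrank' : finrank R (span R {v} ⊔ S₁ : Submodule R V) = finrank R S₁ + 1 := by
        have h0 := Submodule.finrank_sup_add_finrank_inf_eq (span R {v}) S₁
        rw [hbot, finrank_span_singleton hv0, finrank_bot] at h0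
        omega
      have h1 := strict S₁ (span R {v} ⊔ S₁) le_sup_right hrank'
      have h2 := ih (span R {v} ⊔ S₁) (by omega)
      omega
  -- lower bound by upward induction
  have lower : ∀ k (S₁ : Submodule R V), finrank R S₁ = k + 1 →
      k + 1 ≤ finrank R' (span R' (g '' (S₁ : Set V))) := by
    intro k
    induction k with
    | zero =>
      intro S₁ h
      have hSbot : S₁ ≠ ⊥ := by
        intro hc
        rw [hc, finrank_bot] at h
        omega
      obtain ⟨x, hx, hx0⟩ := (Submodule.ne_bot_iff _).1 hSbot
      have hgx : g x ∈ span R' (g '' (S₁ : Set V)) :=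
        Submodule.subset_span ⟨x, hx, rfl⟩
      have hgx0 : g x ≠ 0 := aux_gnonzero g hGL hnt hx0
      have hnebot : span R' (g '' (S₁ : Set V)) ≠ ⊥ := by
        intro hc
        rw [hc] at hgx
        exact hgx0 (by simpa using hgx)
      haveI := Submodule.finiteDimensional_of_le (hleW (S₁ : Set V))
      have hne0 : finrank R' (span R' (g '' (S₁ : Set V))) ≠ 0 :=
        fun hc => hnebot (Submodule.finrank_eq_zero.1 hc)
      omega
    | succ k ih =>
      intro S₁ h
      obtain ⟨b, hb⟩ := exists_linearIndependent_of_le_finrank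
        (R := R) (M := ↥S₁) (show k + 1 ≤ finrank R S₁ by omega)
      set S₀ := Submodule.map S₁.subtype (span R (Set.range b)) with hS₀def
      have hS₀le : S₀ ≤ S₁ := Submodule.map_subtype_le _ _
      have hS₀rank : finrank R S₀ = k + 1 := by
        rw [hS₀def,
          ← (Submodule.equivMapOfInjective _ (Submodule.injective_subtype _) _).finrank_eq,
          finrank_span_eq_card hb, Fintype.card_fin]
      have h1 := ih S₀ hS₀rank
      have h2 := strict S₀ S₁ hS₀le (by omega)
      omega
  have hk : 1 ≤ finrank R S := by
    have : finrank R S ≠ 0 := fun hc => hS (Submodule.finrank_eq_zero.1 hc)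
    omega
  have hSn : finrank R S ≤ n := by
    have := Submodule.finrank_le S
    omega
  have hub := upper (n - finrank R S) S (by omega)
  have hlb := lower (finrank R S - 1) S (by omega)
  have hδ : finrank R' (span R' (g '' (S : Set V))) = finrank R S := by omega
  haveI := Submodule.finiteDimensional_of_le (hleW (S : Set V))
  rw [← Module.finrank_eq_rank, hδ]
end

section
/- Let V and V' be left vector spaces over division rings R and R' with dim V = n ≥ 2 finite, and let f : ℙ(V) → ℙ(V') be a non-constant PGL-mapping. Then f is injective. -/
open Projectivization

section Aux

variable {R V : Type*} [DivisionRing R] [AddCommGroup V] [Module R V]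

/-- Given two linearly independent pairs of vectors in a finite-dimensional space,
there is a linear automorphism carrying one pair to the other. -/
lemma aux_exists_equiv [FiniteDimensional R V]
    {x y a b : V} (hxy : LinearIndependent R ![x, y]) (hab : LinearIndependent R ![a, b]) :
    ∃ u : V ≃ₗ[R] V, u x = a ∧ u y = b := by
  have hxy' : LinearIndepOn R id (Set.range ![x, y]) := hxy.linearIndepOn_id
  have hab' : LinearIndepOn R id (Set.range ![a, b]) := hab.linearIndepOn_id
  let B1 := Module.Basis.extend hxy'
  let B2 := Module.Basis.extend hab'
  have hcard : Fintype.card (hxy'.extend (Set.subset_univ _))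
      = Fintype.card (hab'.extend (Set.subset_univ _)) := by
    rw [← Module.finrank_eq_card_basis B1, ← Module.finrank_eq_card_basis B2]
  have hx : x ∈ hxy'.extend (Set.subset_univ _) :=
    hxy'.subset_extend _ ⟨0, by simp⟩
  have hy : y ∈ hxy'.extend (Set.subset_univ _) :=
    hxy'.subset_extend _ ⟨1, by simp⟩
  have ha : a ∈ hab'.extend (Set.subset_univ _) :=
    hab'.subset_extend _ ⟨0, by simp⟩
  have hb : b ∈ hab'.extend (Set.subset_univ _) :=
    hab'.subset_extend _ ⟨1, by simp⟩
  have hxney : x ≠ y := by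
    intro h
    have h01 : (0 : Fin 2) = 1 := hxy.injective (by simp [h])
    simp at h01
  have haneb : a ≠ b := by
    intro h
    have h01 : (0 : Fin 2) = 1 := hab.injective (by simp [h])
    simp at h01
  classical
  let g0 : (hxy'.extend (Set.subset_univ _)) ≃ (hab'.extend (Set.subset_univ _)) :=
    Fintype.equivOfCardEq hcard
  let g1 := g0.trans (Equiv.swap (g0 ⟨x, hx⟩) ⟨a, ha⟩)
  have hg1x : g1 ⟨x, hx⟩ = ⟨a, ha⟩ := by simp [g1]
  let g2 := g1.trans (Equiv.swap (g1 ⟨y, hy⟩) ⟨b, hb⟩)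
  have hg2y : g2 ⟨y, hy⟩ = ⟨b, hb⟩ := by simp [g2]
  have hg2x : g2 ⟨x, hx⟩ = ⟨a, ha⟩ := by
    have h1 : g1 ⟨y, hy⟩ ≠ (⟨a, ha⟩ : (hab'.extend (Set.subset_univ _))) := by
      rw [← hg1x]
      intro h
      exact hxney (Subtype.ext_iff.mp (g1.injective h)).symm
    have h2 : (⟨b, hb⟩ : (hab'.extend (Set.subset_univ _))) ≠ ⟨a, ha⟩ := by
      simp [haneb.symm]
    simp [g2, hg1x, Equiv.swap_apply_of_ne_of_ne h1.symm h2.symm]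
  refine ⟨B1.equiv B2 g2, ?_, ?_⟩
  · have := B1.equiv_apply (i := ⟨x, hx⟩) B2 g2
    simpa [B1, B2, Module.Basis.extend_apply_self, hg2x] using this
  · have := B1.equiv_apply (i := ⟨y, hy⟩) B2 g2
    simpa [B1, B2, Module.Basis.extend_apply_self, hg2y] using this

/-- 2-transitivity of GL on projective space. -/
lemma aux_two_trans [FiniteDimensional R V]
    {P Q A B : Projectivization R V} (hPQ : P ≠ Q) (hAB : A ≠ B) :
    ∃ u : V ≃ₗ[R] V,
      Projectivization.map u.toLinearMap u.injective P = A ∧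
      Projectivization.map u.toLinearMap u.injective Q = B := by
  have h1 : LinearIndependent R ![P.rep, Q.rep] := by
    have := (independent_pair_iff_ne P Q).2 hPQ
    rw [independent_iff] at this
    convert this using 1
    ext i
    fin_cases i <;> rfl
  have h2 : LinearIndependent R ![A.rep, B.rep] := by
    have := (independent_pair_iff_ne A B).2 hAB
    rw [independent_iff] at this
    convert this using 1
    ext i
    fin_cases i <;> rfl
  obtain ⟨u, hux, huy⟩ := aux_exists_equiv h1 h2
  refine ⟨u, ?_, ?_⟩
  · conv_lhs => rw [← P.mk_rep]
    rw [Projectivization.map_mk]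
    simp only [LinearEquiv.coe_coe, hux]
    exact A.mk_rep
  · conv_lhs => rw [← Q.mk_rep]
    rw [Projectivization.map_mk]
    simp only [LinearEquiv.coe_coe, huy]
    exact B.mk_rep

end Aux

/-- **Lemma 10(2) (Pankov).** A non-constant PGL-mapping `f : ℙ(V) → ℙ(V')`
(with `dim V = n ≥ 2` finite) is injective. -/
theorem stmt_16 {R R' V V' : Type*} [DivisionRing R] [DivisionRing R']
    [AddCommGroup V] [Module R V] [AddCommGroup V'] [Module R' V']
    (n : ℕ) (hn : 2 ≤ n) [FiniteDimensional R V] (hdim : Module.finrank R V = n)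
    (f : Projectivization R V → Projectivization R' V')
    (hPGL : ∀ u : V ≃ₗ[R] V, ∃ u' : V' ≃ₗ[R'] V',
        ∀ P, f (Projectivization.map u.toLinearMap u.injective P)
          = Projectivization.map u'.toLinearMap u'.injective (f P))
    (hnc : ∃ P Q, f P ≠ f Q) :
    Function.Injective f := by
  intro P Q hfPQ
  by_contra hPQ
  -- show f is constant
  obtain ⟨A, B, hAB⟩ := hnc
  apply hAB
  rcases eq_or_ne A B with h | h
  · rw [h]
  obtain ⟨u, huP, huQ⟩ := aux_two_trans (R := R) (V := V) hPQ h
  obtain ⟨u', hu'⟩ := hPGL u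
  calc f A = f (Projectivization.map u.toLinearMap u.injective P) := by rw [huP]
    _ = Projectivization.map u'.toLinearMap u'.injective (f P) := hu' P
    _ = Projectivization.map u'.toLinearMap u'.injective (f Q) := by rw [hfPQ]
    _ = f (Projectivization.map u.toLinearMap u.injective Q) := (hu' Q).symm
    _ = f B := by rw [huQ]
end
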